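/- arXiv:1007.1836 — 4 statements merged into one kernel-verified Lean document; each statement's English description precedes it below -/
import Mathlib

section
/- Let P_1,...,P_n be real univariate polynomials with deg P_i = d_i > 0, and let 0 ≤ k < min{d_1,...,d_n}. Then the generalized subresultant matrix N_k(P_1,...,P_n) has full column rank if and only if deg(gcd(P_1,...,P_n)) ≤ k. -/
open Polynomial Finset

/-- Entry formula for the convolution (Toeplitz) matrix of a polynomial `P`
regarded as having degree `m`: column `c` carries the coefficient vector of `P`
(in degree-descending order) shifted down by `c`. -/
noncomputable def convEntry (P : ℝ[X]) (m r c : ℕ) : ℝ :=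
  if c ≤ r ∧ r ≤ c + m then P.coeff (m + c - r) else 0

/-- The convolution matrix `C_j(P)` of a polynomial `P` of degree `m`:
it has `m + j + 1` rows and `j + 1` columns, and `C_j(P) · h` is the
coefficient vector (degree-descending) of `H · P` when `h` is the
coefficient vector of a polynomial `H` of degree at most `j`. -/
noncomputable def convMat (P : ℝ[X]) (m j : ℕ) : Matrix (Fin (m + j + 1)) (Fin (j + 1)) ℝ :=
  fun r c => convEntry P m r c

/-- The `k`-th generalized subresultant matrix `N_k(P_1, ..., P_n)` (Rupprecht's
formulation): for `i = 2, ..., n`, the `i`-th block row is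
`( C_{d_1-1-k}(P_i), 0, ..., 0, C_{d_i-1-k}(P_1), 0, ..., 0 )` with
`C_{d_i-1-k}(P_1)` in the `i`-th block column.  The block row for `i = 0` is empty. -/
noncomputable def genSubres {n : ℕ} [NeZero n] (P : Fin n → ℝ[X]) (d : Fin n → ℕ) (k : ℕ) :
    Matrix ((i : Fin n) × Fin (if i = 0 then 0 else d 0 + d i - k))
           ((j : Fin n) × Fin (d j - k)) ℝ :=
  fun r c =>
    if c.1 = 0 then convEntry (P r.1) (d r.1) r.2 c.2
    else if c.1 = r.1 then convEntry (P 0) (d 0) r.2 c.2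
    else 0

/-- The squared 2-norm of the coefficient vector of a polynomial. -/
noncomputable def polyNormSq (Q : ℝ[X]) : ℝ :=
  ∑ j ∈ Finset.range (Q.natDegree + 1), (Q.coeff j) ^ 2

/-! ### Auxiliary material -/

noncomputable def HP (e : ℕ) (h : ℕ → ℝ) : ℝ[X] :=
  ∑ t ∈ Finset.range (e + 1), Polynomial.C (h t) * Polynomial.X ^ (e - t)

lemma HP_natDegree_le (e : ℕ) (h : ℕ → ℝ) : (HP e h).natDegree ≤ e := by
  apply Polynomial.natDegree_sum_le_of_forall_le
  intro t ht
  refine le_trans (Polynomial.natDegree_C_mul_le _ _) ?_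
  simp only [Polynomial.natDegree_X_pow]
  omega

lemma HP_coeff (e : ℕ) (h : ℕ → ℝ) {q : ℕ} (hq : q ≤ e) : (HP e h).coeff q = h (e - q) := by
  rw [HP, Polynomial.finset_sum_coeff]
  rw [Finset.sum_eq_single (e - q)]
  · simp [Polynomial.coeff_C_mul, Polynomial.coeff_X_pow, show e - (e - q) = q by omega]
  · intro t ht hne
    have ht' : t ≤ e := by have := Finset.mem_range.mp ht; omega
    simp only [Polynomial.coeff_C_mul, Polynomial.coeff_X_pow, mul_ite, mul_one, mul_zero]
    rw [if_neg]; omega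
  · intro hmem
    exact absurd (Finset.mem_range.mpr (by omega)) hmem

lemma HP_congr (e : ℕ) (h h' : ℕ → ℝ) (hh : ∀ t ≤ e, h t = h' t) : HP e h = HP e h' := by
  unfold HP
  apply Finset.sum_congr rfl
  intro t ht
  rw [hh t (by have := Finset.mem_range.mp ht; omega)]

lemma HP_eq (e : ℕ) (Q : ℝ[X]) (hQ : Q.natDegree ≤ e) :
    HP e (fun t => Q.coeff (e - t)) = Q := by
  ext q
  by_cases hq : q ≤ e
  · rw [HP_coeff e _ hq]; congr 1; omega
  · rw [Polynomial.coeff_eq_zero_of_natDegree_lt (lt_of_le_of_lt hQ (by omega)),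
      Polynomial.coeff_eq_zero_of_natDegree_lt (lt_of_le_of_lt (HP_natDegree_le e _) (by omega))]

lemma conv_key (P : ℝ[X]) (m e : ℕ) (h : ℕ → ℝ) (s : ℕ) (hP : P.natDegree = m)
    (hs : s ≤ m + e) :
    ∑ t ∈ Finset.range (e + 1), convEntry P m s t * h t
      = (HP e h * P).coeff (m + e - s) := by
  rw [HP, Finset.sum_mul, Polynomial.finset_sum_coeff]
  apply Finset.sum_congr rfl
  intro t htm
  have ht : t ≤ e := by have := Finset.mem_range.mp htm; omega
  rw [mul_right_comm, Polynomial.coeff_mul_X_pow', Polynomial.coeff_C_mul]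
  rw [convEntry]
  by_cases h1 : t ≤ s ∧ s ≤ t + m
  · rw [if_pos h1, if_pos (by omega)]
    rw [show m + e - s - (e - t) = m + t - s from by omega]
    ring
  · rw [if_neg h1, zero_mul]
    by_cases h2 : e - t ≤ m + e - s
    · rw [if_pos h2]
      rw [Polynomial.coeff_eq_zero_of_natDegree_lt (by omega), mul_zero]
    · rw [if_neg h2]

/-- The vector `v` on the column index set, as a family of coefficient functions. -/
noncomputable def vf {n : ℕ} (d : Fin n → ℕ) (k : ℕ)
    (v : ((j : Fin n) × Fin (d j - k)) → ℝ) (j : Fin n) (t : ℕ) : ℝ :=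
  if ht : t < d j - k then v ⟨j, ⟨t, ht⟩⟩ else 0

lemma mulVec_apply {n : ℕ} [NeZero n] (P : Fin n → ℝ[X]) (d : Fin n → ℕ) (k : ℕ)
    (hdeg : ∀ i, (P i).natDegree = d i) (hk : ∀ i, k < d i)
    (v : ((j : Fin n) × Fin (d j - k)) → ℝ)
    (r : (i : Fin n) × Fin (if i = 0 then 0 else d 0 + d i - k)) (hi : r.1 ≠ 0) :
    (genSubres P d k).mulVec v r
      = (HP (d 0 - k - 1) (vf d k v 0) * P r.1
          + HP (d r.1 - k - 1) (vf d k v r.1) * P 0).coeff (d 0 + d r.1 - k - 1 - r.2) := by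
  obtain ⟨i, s⟩ := r
  simp only at hi
  have hs : (s : ℕ) < d 0 + d i - k := by
    have h1 := s.isLt
    have h2 : (if i = 0 then 0 else d 0 + d i - k) = d 0 + d i - k := if_neg hi
    omega
  have hsum : (genSubres P d k).mulVec v ⟨i, s⟩
      = ∑ j : Fin n, ∑ t : Fin (d j - k), genSubres P d k ⟨i, s⟩ ⟨j, t⟩ * v ⟨j, t⟩ := by
    simp only [Matrix.mulVec, dotProduct]
    rw [← Finset.univ_sigma_univ, Finset.sum_sigma]
  rw [hsum]
  have hzero : ∀ j ∈ Finset.univ, j ∉ ({0, i} : Finset (Fin n)) →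
      (∑ t : Fin (d j - k), genSubres P d k ⟨i, s⟩ ⟨j, t⟩ * v ⟨j, t⟩) = 0 := by
    intro j _ hj
    simp only [Finset.mem_insert, Finset.mem_singleton, not_or] at hj
    apply Finset.sum_eq_zero
    intro t _
    rw [genSubres]
    simp only [if_neg hj.1, if_neg hj.2, zero_mul]
  rw [← Finset.sum_subset (Finset.subset_univ ({0, i} : Finset (Fin n))) hzero]
  rw [Finset.sum_insert (by simp [Ne.symm hi]), Finset.sum_singleton]
  have e0 : d 0 - k = (d 0 - k - 1) + 1 := by have := hk 0; omega
  have ei : d i - k = (d i - k - 1) + 1 := by have := hk i; omega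
  have g0 : (∑ t : Fin (d 0 - k), genSubres P d k ⟨i, s⟩ ⟨0, t⟩ * v ⟨0, t⟩)
      = (HP (d 0 - k - 1) (vf d k v 0) * P i).coeff (d 0 + d i - k - 1 - s) := by
    have : ∀ t : Fin (d 0 - k), genSubres P d k ⟨i, s⟩ ⟨0, t⟩ * v ⟨0, t⟩
        = convEntry (P i) (d i) s t * vf d k v 0 t := by
      intro t
      rw [genSubres, if_pos rfl, vf, dif_pos t.isLt]
    rw [Finset.sum_congr rfl (fun t _ => this t), Fin.sum_univ_eq_sum_range
      (fun t => convEntry (P i) (d i) s t * vf d k v 0 t)]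
    rw [e0, conv_key (P i) (d i) (d 0 - k - 1) _ s (hdeg i) (by omega)]
    congr 1
    omega
  have gi : (∑ t : Fin (d i - k), genSubres P d k ⟨i, s⟩ ⟨i, t⟩ * v ⟨i, t⟩)
      = (HP (d i - k - 1) (vf d k v i) * P 0).coeff (d 0 + d i - k - 1 - s) := by
    have : ∀ t : Fin (d i - k), genSubres P d k ⟨i, s⟩ ⟨i, t⟩ * v ⟨i, t⟩
        = convEntry (P 0) (d 0) s t * vf d k v i t := by
      intro t
      rw [genSubres, if_neg hi, if_pos rfl, vf, dif_pos t.isLt]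
    rw [Finset.sum_congr rfl (fun t _ => this t), Fin.sum_univ_eq_sum_range
      (fun t => convEntry (P 0) (d 0) s t * vf d k v i t)]
    rw [ei, conv_key (P 0) (d 0) (d i - k - 1) _ s (hdeg 0) (by omega)]
    congr 1
    omega
  rw [g0, gi, Polynomial.coeff_add]

/-- Polynomial core, direction "gcd small ⇒ only trivial syzygies". -/
lemma small_gcd_syzygy {n : ℕ} [NeZero n] (P : Fin n → ℝ[X]) (d : Fin n → ℕ) (k : ℕ)
    (hdeg : ∀ i, (P i).natDegree = d i) (hdpos : ∀ i, 0 < d i) (hk : ∀ i, k < d i)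
    (hg : (Finset.univ.gcd P).natDegree ≤ k)
    (H : Fin n → ℝ[X]) (hH : ∀ j, (H j).natDegree ≤ d j - k - 1)
    (heq : ∀ i : Fin n, i ≠ 0 → H 0 * P i + H i * P 0 = 0) :
    ∀ j, H j = 0 := by
  have hP0 : P 0 ≠ 0 := fun h => by
    have := hdeg 0; rw [h] at this; simp at this; have := hdpos 0; omega
  have hPne : ∀ i, P i ≠ 0 := fun i h => by
    have := hdeg i; rw [h] at this; simp at this; have := hdpos i; omega
  set G := Finset.univ.gcd P with hG
  have hGne : G ≠ 0 := by
    intro h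
    exact hP0 (Finset.gcd_eq_zero_iff.mp h 0 (Finset.mem_univ 0))
  have hH0 : H 0 = 0 := by
    by_contra hne
    have hdvd : ∀ i : Fin n, P 0 ∣ H 0 * P i := by
      intro i
      by_cases h0 : i = 0
      · subst h0; exact dvd_mul_left (P 0) (H 0)
      · have := heq i h0
        refine ⟨-(H i), ?_⟩
        linear_combination this
    have h1 : P 0 ∣ normalize (H 0) * G := by
      rw [hG, ← Finset.gcd_mul_left]
      exact Finset.dvd_gcd fun i _ => hdvd i
    have h2 : P 0 ∣ H 0 * G :=
      h1.trans (mul_dvd_mul_right (normalize_dvd_iff.mpr dvd_rfl) G)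
    have hne' : H 0 * G ≠ 0 := mul_ne_zero hne hGne
    have := Polynomial.natDegree_le_of_dvd h2 hne'
    rw [Polynomial.natDegree_mul hne hGne, hdeg 0] at this
    have := hH 0
    have := hk 0
    omega
  intro j
  by_cases h0 : j = 0
  · subst h0; exact hH0
  · have := heq j h0
    rw [hH0, zero_mul, zero_add] at this
    rcases mul_eq_zero.mp this with h | h
    · exact h
    · exact absurd h hP0

/-- Polynomial core, direction "gcd big ⇒ nontrivial syzygy". -/
lemma big_gcd_syzygy {n : ℕ} [NeZero n] (P : Fin n → ℝ[X]) (d : Fin n → ℕ) (k : ℕ)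
    (hdeg : ∀ i, (P i).natDegree = d i) (hdpos : ∀ i, 0 < d i) (hk : ∀ i, k < d i)
    (hg : k < (Finset.univ.gcd P).natDegree) :
    ∃ H : Fin n → ℝ[X], H 0 ≠ 0 ∧ (∀ j, (H j).natDegree ≤ d j - k - 1) ∧
      ∀ i : Fin n, i ≠ 0 → H 0 * P i + H i * P 0 = 0 := by
  have hPne : ∀ i, P i ≠ 0 := fun i h => by
    have := hdeg i; rw [h] at this; simp at this; have := hdpos i; omega
  set G := Finset.univ.gcd P with hG
  have hGne : G ≠ 0 := fun h => hPne 0 (Finset.gcd_eq_zero_iff.mp h 0 (Finset.mem_univ 0))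
  have hdvd : ∀ i, G ∣ P i := fun i => Finset.gcd_dvd (Finset.mem_univ i)
  choose Q hQ using fun i => (hdvd i)
  have hQne : ∀ i, Q i ≠ 0 := by
    intro i h
    apply hPne i
    rw [hQ i, h, mul_zero]
  have hQdeg : ∀ i, (Q i).natDegree ≤ d i - k - 1 := by
    intro i
    have h1 : d i = G.natDegree + (Q i).natDegree := by
      rw [← hdeg i, hQ i, Polynomial.natDegree_mul hGne (hQne i)]
    have := hk i
    omega
  refine ⟨fun i => if i = 0 then Q 0 else -(Q i), by simpa using hQne 0, ?_, ?_⟩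
  · intro j
    by_cases h0 : j = 0
    · subst h0; simpa using hQdeg 0
    · simp only [if_neg h0, Polynomial.natDegree_neg]
      exact hQdeg j
  · intro i h0
    simp only [if_neg h0, if_true, eq_self_iff_true]
    rw [hQ i, hQ 0]
    ring


/-- the generalized subresultant matrix `N_k(P_1,...,P_n)` has full
column rank if and only if `deg (gcd (P_1, ..., P_n)) ≤ k`. -/
theorem stmt2 {n : ℕ} [NeZero n] (hn : 2 ≤ n) (P : Fin n → ℝ[X]) (d : Fin n → ℕ)
    (hdeg : ∀ i, (P i).natDegree = d i) (hdpos : ∀ i, 0 < d i)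
    (k : ℕ) (hk : ∀ i, k < d i) :
    (genSubres P d k).rank = Fintype.card ((j : Fin n) × Fin (d j - k)) ↔
      (Finset.univ.gcd P).natDegree ≤ k := by
  classical
  set A := genSubres P d k with hA
  -- rank = card ↔ trivial kernel
  have hrank : A.rank = Fintype.card ((j : Fin n) × Fin (d j - k)) ↔
      ∀ v, A.mulVec v = 0 → v = 0 := by
    have hrn := LinearMap.finrank_range_add_finrank_ker A.mulVecLin
    rw [Module.finrank_fintype_fun_eq_card] at hrn
    constructor
    · intro h v hv
      have hker : LinearMap.ker A.mulVecLin = ⊥ := by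
        rw [← Submodule.finrank_eq_zero (R := ℝ)]
        have : A.rank = Module.finrank ℝ (LinearMap.range A.mulVecLin) := rfl
        omega
      have := LinearMap.ker_eq_bot'.mp hker v (by rwa [Matrix.mulVecLin_apply])
      exact this
    · intro h
      have hker : LinearMap.ker A.mulVecLin = ⊥ :=
        LinearMap.ker_eq_bot'.mpr fun v hv => h v (by rwa [Matrix.mulVecLin_apply] at hv)
      have : Module.finrank ℝ ↥(LinearMap.ker A.mulVecLin) = 0 :=
        Submodule.finrank_eq_zero.mpr hker
      have hr : A.rank = Module.finrank ℝ (LinearMap.range A.mulVecLin) := rfl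
      omega
  rw [hrank]
  constructor
  · -- trivial kernel ⇒ gcd small
    intro hinj
    by_contra hbig
    push_neg at hbig
    obtain ⟨H, hH0, hHdeg, hHeq⟩ := big_gcd_syzygy P d k hdeg hdpos hk hbig
    set v : ((j : Fin n) × Fin (d j - k)) → ℝ :=
      fun c => (H c.1).coeff (d c.1 - k - 1 - c.2) with hv
    have hvf : ∀ j, HP (d j - k - 1) (vf d k v j) = H j := by
      intro j
      rw [HP_congr (d j - k - 1) (vf d k v j)
        (fun t => (H j).coeff (d j - k - 1 - t)) ?_, HP_eq _ _ (hHdeg j)]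
      intro t ht
      rw [vf, dif_pos (by have := hk j; omega)]
    have hmv : A.mulVec v = 0 := by
      funext r
      by_cases hi : r.1 = 0
      · exfalso
        have h1 := r.2.isLt
        have h2 : (if r.1 = 0 then 0 else d 0 + d r.1 - k) = 0 := if_pos hi
        omega
      · rw [hA, mulVec_apply P d k hdeg hk v r hi, hvf 0, hvf r.1,
          hHeq r.1 hi, Polynomial.coeff_zero]
        rfl
    have := hinj v hmv
    apply hH0
    have hd0 : (H 0).natDegree < d 0 - k := by have := hHdeg 0; have := hk 0; omega
    ext q
    rw [Polynomial.coeff_zero]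
    by_cases hq : q ≤ d 0 - k - 1
    · have : v ⟨0, ⟨d 0 - k - 1 - q, by omega⟩⟩ = 0 := by rw [this]; rfl
      rw [hv] at this
      simpa [show d 0 - k - 1 - (d 0 - k - 1 - q) = q by omega] using this
    · exact Polynomial.coeff_eq_zero_of_natDegree_lt (by omega)
  · -- gcd small ⇒ trivial kernel
    intro hg v hmv
    set H : Fin n → ℝ[X] := fun j => HP (d j - k - 1) (vf d k v j) with hH
    have hHdeg : ∀ j, (H j).natDegree ≤ d j - k - 1 := fun j => HP_natDegree_le _ _
    have hHeq : ∀ i : Fin n, i ≠ 0 → H 0 * P i + H i * P 0 = 0 := by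
      intro i hi
      set D := d 0 + d i - k - 1 with hD
      have hdegQ : (H 0 * P i + H i * P 0).natDegree ≤ D := by
        refine le_trans (Polynomial.natDegree_add_le _ _) (max_le ?_ ?_) <;>
        · refine le_trans (Polynomial.natDegree_mul_le) ?_
          have := hHdeg 0; have := hHdeg i; have := hk 0; have := hk i
          rw [hdeg]
          omega
      ext q
      rw [Polynomial.coeff_zero]
      by_cases hq : q ≤ D
      · have hrow : (d 0 + d i - k - 1 - q) < (if i = 0 then 0 else d 0 + d i - k) := by
          rw [if_neg hi]; have := hk 0; have := hk i; omega
        have := congrFun hmv ⟨i, ⟨d 0 + d i - k - 1 - q, hrow⟩⟩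
        rw [hA, mulVec_apply P d k hdeg hk v ⟨i, _⟩ hi] at this
        simp only [Pi.zero_apply] at this
        rw [show d 0 + d i - k - 1 - (d 0 + d i - k - 1 - q) = q by omega] at this
        exact this
      · exact Polynomial.coeff_eq_zero_of_natDegree_lt (by omega)
    have hz := small_gcd_syzygy P d k hdeg hdpos hk hg H hHdeg hHeq
    funext c
    obtain ⟨j, t⟩ := c
    have ht : (t : ℕ) ≤ d j - k - 1 := by have := t.isLt; have := hk j; omega
    have : (H j).coeff (d j - k - 1 - t) = vf d k v j (d j - k - 1 - (d j - k - 1 - t)) := by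
      rw [hH]
      exact HP_coeff _ _ (by omega)
    rw [hz j] at this
    rw [show d j - k - 1 - (d j - k - 1 - (t : ℕ)) = t by omega] at this
    simp only [Polynomial.coeff_zero] at this
    rw [vf, dif_pos t.isLt] at this
    simp only [Fin.eta] at this
    rw [Pi.zero_apply, ← this]
end

section
/- Let U_1,...,U_n be real univariate polynomials of degrees e_1,...,e_n ≥ 1 respectively that are pairwise relatively prime. Then the generalized Sylvester matrix N(U_1,...,U_n) has full column rank (its rank equals its number of columns e_1 + e_2 + ... + e_n). -/
open Polynomial Finset

lemma conv_row_sum (P : ℝ[X]) (m N : ℕ) (hP : P.natDegree ≤ m) (h : Fin N → ℝ)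
    (r : ℕ) (hr : r + 1 ≤ m + N) :
    ∑ c : Fin N, (if (c : ℕ) ≤ r ∧ r ≤ (c : ℕ) + m then P.coeff (m + (c : ℕ) - r) else 0) * h c
      = (P * ∑ c : Fin N, h c • X ^ (N - 1 - (c : ℕ))).coeff (m + N - 1 - r) := by
  rw [Finset.mul_sum, Polynomial.finset_sum_coeff]
  apply Finset.sum_congr rfl
  intro c _
  have hc := c.isLt
  rw [mul_smul_comm, Polynomial.coeff_smul, smul_eq_mul, Polynomial.coeff_mul_X_pow']
  by_cases h1 : (c : ℕ) ≤ r
  · by_cases h2 : r ≤ (c : ℕ) + m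
    · rw [if_pos ⟨h1, h2⟩, if_pos (by omega),
        show m + N - 1 - r - (N - 1 - (c : ℕ)) = m + (c : ℕ) - r by omega]
      ring
    · rw [if_neg (by tauto), if_neg (by omega), mul_zero, zero_mul]
  · rw [if_neg (by tauto), if_pos (by omega),
      Polynomial.coeff_eq_zero_of_natDegree_lt
        (show P.natDegree < m + N - 1 - r - (N - 1 - (c : ℕ)) by omega),
      mul_zero, zero_mul]

lemma coeff_extract (N : ℕ) (h : Fin N → ℝ) (c : Fin N) :
    (∑ c' : Fin N, h c' • (X:ℝ[X]) ^ (N - 1 - (c' : ℕ))).coeff (N - 1 - (c : ℕ)) = h c := by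
  rw [Polynomial.finset_sum_coeff,
    Finset.sum_eq_single_of_mem c (Finset.mem_univ c) ?_]
  · rw [Polynomial.coeff_smul, Polynomial.coeff_X_pow, if_pos rfl, smul_eq_mul, mul_one]
  · intro b _ hb
    have hb1 := b.isLt
    have hc1 := c.isLt
    rw [Polynomial.coeff_smul, Polynomial.coeff_X_pow, if_neg, smul_zero]
    intro hEq
    exact hb (Fin.ext (by omega))

lemma deg_le_aux (N : ℕ) (h : Fin N → ℝ) :
    (∑ c : Fin N, h c • (X:ℝ[X]) ^ (N - 1 - (c : ℕ))).natDegree ≤ N - 1 := by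
  apply Polynomial.natDegree_sum_le_of_forall_le
  intro c _
  exact (Polynomial.natDegree_smul_le _ _).trans
    (by rw [Polynomial.natDegree_X_pow]; omega)

/-- the generalized Sylvester matrix `N(U_1, ..., U_n)` of pairwise
relatively prime polynomials of degrees `e_i ≥ 1` has full column rank, i.e.,
its rank equals its number of columns `e_1 + ... + e_n`. -/
theorem stmt5 {n : ℕ} [NeZero n] (hn : 2 ≤ n) (U : Fin n → ℝ[X]) (e : Fin n → ℕ)
    (hdeg : ∀ i, (U i).natDegree = e i) (hepos : ∀ i, 1 ≤ e i)
    (hcop : ∀ i j, i ≠ j → IsCoprime (U i) (U j)) :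
    (genSubres U e 0).rank = ∑ i, e i := by
  classical
  have hU0 : U 0 ≠ 0 := by
    intro h
    have h1 := hdeg 0
    rw [h, Polynomial.natDegree_zero] at h1
    have := hepos 0
    omega
  have hinj : Function.Injective (genSubres U e 0).mulVecLin := by
    rw [← LinearMap.ker_eq_bot, LinearMap.ker_eq_bot']
    intro v hv
    set H : Fin n → ℝ[X] :=
      fun j => ∑ c : Fin (e j - 0), v ⟨j, c⟩ • (X:ℝ[X]) ^ (e j - 0 - 1 - (c : ℕ)) with hH
    have hdegH : ∀ j, (H j).natDegree ≤ e j - 1 := by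
      intro j
      have := deg_le_aux (e j - 0) (fun c => v ⟨j, c⟩)
      simpa [hH] using this
    have key : ∀ i : Fin n, i ≠ 0 → U i * H 0 + U 0 * H i = 0 := by
      intro i hi
      apply Polynomial.ext
      intro t
      rw [Polynomial.coeff_zero]
      by_cases ht : t ≤ e 0 + e i - 1
      · -- use row r = e 0 + e i - 1 - t
        set r : ℕ := e 0 + e i - 1 - t with hrdef
        have h0i := hepos 0
        have hii := hepos i
        have hrlt : r < if i = 0 then 0 else e 0 + e i - 0 := by
          rw [if_neg hi]; omega
        have h0 := congrFun hv ⟨i, ⟨r, hrlt⟩⟩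
        rw [Matrix.mulVecLin_apply] at h0
        have h0' : ∑ j : Fin n, ∑ c : Fin (e j - 0),
            genSubres U e 0 ⟨i, ⟨r, hrlt⟩⟩ ⟨j, c⟩ * v ⟨j, c⟩ = 0 := by
          have : (genSubres U e 0).mulVec v ⟨i, ⟨r, hrlt⟩⟩ = 0 := by
            rw [h0]; rfl
          rw [Matrix.mulVec, dotProduct] at this
          rw [← this, ← Finset.univ_sigma_univ, Finset.sum_sigma]
        have hsplit : ∀ j : Fin n,
            (∑ c : Fin (e j - 0), genSubres U e 0 ⟨i, ⟨r, hrlt⟩⟩ ⟨j, c⟩ * v ⟨j, c⟩)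
            = (if j = 0 then
                ∑ c : Fin (e 0 - 0), (if (c:ℕ) ≤ r ∧ r ≤ (c:ℕ) + e i then
                  (U i).coeff (e i + (c:ℕ) - r) else 0) * v ⟨0, c⟩ else 0)
            + (if j = i then
                ∑ c : Fin (e i - 0), (if (c:ℕ) ≤ r ∧ r ≤ (c:ℕ) + e 0 then
                  (U 0).coeff (e 0 + (c:ℕ) - r) else 0) * v ⟨i, c⟩ else 0) := by
          intro j
          by_cases hj0 : j = 0
          · subst hj0
            rw [if_pos rfl, if_neg (Ne.symm hi), add_zero]
            apply Finset.sum_congr rfl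
            intro c _
            simp [genSubres, convEntry]
          · by_cases hji : j = i
            · rw [if_neg hj0, if_pos hji, zero_add]
              subst hji
              apply Finset.sum_congr rfl
              intro c _
              simp [genSubres, convEntry, hj0]
            · rw [if_neg hj0, if_neg hji, add_zero]
              apply Finset.sum_eq_zero
              intro c _
              simp [genSubres, hj0, hji]
        rw [Finset.sum_congr rfl (fun j _ => hsplit j), Finset.sum_add_distrib,
          Finset.sum_ite_eq' _ (0 : Fin n), Finset.sum_ite_eq' _ i,
          if_pos (Finset.mem_univ _), if_pos (Finset.mem_univ _)] at h0'
        have e1 := conv_row_sum (U i) (e i) (e 0 - 0) (le_of_eq (hdeg i))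
          (fun c => v ⟨0, c⟩) r (by omega)
        have e2 := conv_row_sum (U 0) (e 0) (e i - 0) (le_of_eq (hdeg 0))
          (fun c => v ⟨i, c⟩) r (by omega)
        rw [e1, e2] at h0'
        rw [show e i + (e 0 - 0) - 1 - r = t by omega,
          show e 0 + (e i - 0) - 1 - r = t by omega] at h0'
        rw [Polynomial.coeff_add]
        exact h0'
      · rw [Polynomial.coeff_add,
          Polynomial.coeff_eq_zero_of_natDegree_lt, Polynomial.coeff_eq_zero_of_natDegree_lt,
          add_zero]
        · calc (U 0 * H i).natDegree ≤ (U 0).natDegree + (H i).natDegree :=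
            Polynomial.natDegree_mul_le
          _ < t := by
            have := hdegH i; have := hepos 0; have := hepos i; rw [hdeg 0]; omega
        · calc (U i * H 0).natDegree ≤ (U i).natDegree + (H 0).natDegree :=
            Polynomial.natDegree_mul_le
          _ < t := by
            have := hdegH 0; have := hepos 0; have := hepos i; rw [hdeg i]; omega
    -- now the coprimality argument
    have i1 : Fin n := ⟨1, by omega⟩
    have hi1 : (⟨1, by omega⟩ : Fin n) ≠ 0 := by
      intro h
      have := congrArg Fin.val h
      simp at this
    have hH0 : H 0 = 0 := by
      have hk := key ⟨1, by omega⟩ hi1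
      have hdvd : U 0 ∣ U ⟨1, by omega⟩ * H 0 := by
        refine ⟨-H ⟨1, by omega⟩, ?_⟩
        linear_combination hk
      have hdvd2 : U 0 ∣ H 0 :=
        (hcop 0 ⟨1, by omega⟩ (Ne.symm hi1)).dvd_of_dvd_mul_left hdvd
      by_contra hne
      have := Polynomial.natDegree_le_of_dvd hdvd2 hne
      have := hdegH 0
      have := hepos 0
      rw [hdeg 0] at *
      omega
    have hHi : ∀ i, H i = 0 := by
      intro i
      by_cases hi : i = 0
      · rw [hi]; exact hH0
      · have hk := key i hi
        rw [hH0, mul_zero, zero_add] at hk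
        rcases mul_eq_zero.mp hk with h | h
        · exact absurd h hU0
        · exact h
    funext x
    obtain ⟨j, c⟩ := x
    have := coeff_extract (e j - 0) (fun c => v ⟨j, c⟩) c
    rw [show (∑ c' : Fin (e j - 0), v ⟨j, c'⟩ • (X:ℝ[X]) ^ (e j - 0 - 1 - (c' : ℕ))) = H j from rfl,
      hHi j, Polynomial.coeff_zero] at this
    exact this.symm
  have h1 := LinearMap.finrank_range_of_inj hinj
  have h2 : (genSubres U e 0).rank
      = Module.finrank ℝ (LinearMap.range (genSubres U e 0).mulVecLin) := rfl
  rw [h2, h1, Module.finrank_fintype_fun_eq_card, Fintype.card_sigma]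
  simp
end

section
/- Let P_1,...,P_n be real polynomials with deg P_i = d_i, and 0 < d < min{d_1,...,d_n}. If N_{d-1}(P_1,...,P_n) is rank-deficient (rank strictly less than its number of columns), then deg(gcd(P_1,...,P_n)) ≥ d. -/
open Polynomial Finset

lemma coeff_monomial_mul'' (Q : ℝ[X]) (e s : ℕ) (a : ℝ) :
    (monomial e a * Q).coeff s = if e ≤ s then a * Q.coeff (s - e) else 0 := by
  rw [← C_mul_X_pow_eq_monomial, mul_assoc, coeff_C_mul, X_pow_mul, coeff_mul_X_pow',
    mul_ite, mul_zero]

/-- the polynomial built from block `j` of a kernel vector -/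
noncomputable def Hpoly {n : ℕ} (d : Fin n → ℕ) (k : ℕ)
    (v : ((j : Fin n) × Fin (d j - k)) → ℝ) (j : Fin n) : ℝ[X] :=
  ∑ c : Fin (d j - k), monomial (d j - k - 1 - c.1) (v ⟨j, c⟩)

lemma Hpoly_coeff {n : ℕ} (d : Fin n → ℕ) (k : ℕ)
    (v : ((j : Fin n) × Fin (d j - k)) → ℝ) (j : Fin n) (c : Fin (d j - k)) :
    (Hpoly d k v j).coeff (d j - k - 1 - c.1) = v ⟨j, c⟩ := by
  unfold Hpoly
  rw [finset_sum_coeff, Finset.sum_eq_single c]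
  · simp [coeff_monomial]
  · intro b _ hb
    rw [coeff_monomial, if_neg]
    intro h
    exact hb (Fin.ext (by have := b.2; have := c.2; omega))
  · simp

lemma Hpoly_natDegree {n : ℕ} (d : Fin n → ℕ) (k : ℕ)
    (v : ((j : Fin n) × Fin (d j - k)) → ℝ) (j : Fin n) :
    (Hpoly d k v j).natDegree ≤ d j - k - 1 := by
  unfold Hpoly
  refine (Polynomial.natDegree_sum_le _ _).trans ?_
  rw [Finset.fold_max_le]
  exact ⟨Nat.zero_le _, fun c _ => (natDegree_monomial_le _).trans (by omega)⟩

lemma Hpoly_mul_coeff {n : ℕ} (d : Fin n → ℕ) (k : ℕ)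
    (v : ((j : Fin n) × Fin (d j - k)) → ℝ) (j : Fin n) (Q : ℝ[X]) (s : ℕ) :
    ((Hpoly d k v j) * Q).coeff s
      = ∑ c : Fin (d j - k), v ⟨j, c⟩ *
          (if d j - k - 1 - c.1 ≤ s then Q.coeff (s - (d j - k - 1 - c.1)) else 0) := by
  unfold Hpoly
  rw [Finset.sum_mul, finset_sum_coeff]
  refine Finset.sum_congr rfl fun c _ => ?_
  rw [coeff_monomial_mul'', mul_ite, mul_zero]

lemma entry_match (Q : ℝ[X]) (m D T r s c : ℕ)
    (hq : Q.natDegree = m) (hT : T = D + m) (hD : 1 ≤ D) (hc : c < D)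
    (hs : s < T) (hr : r = T - 1 - s) :
    (if D - 1 - c ≤ s then Q.coeff (s - (D - 1 - c)) else 0) = convEntry Q m r c := by
  unfold convEntry
  split_ifs with h1 h2 h2
  · congr 1; omega
  · apply Polynomial.coeff_eq_zero_of_natDegree_lt; rw [hq]; omega
  · exfalso; omega
  · rfl
/-- if `N_{d-1}(P_1, ..., P_n)` is rank-deficient (its rank is
strictly less than its number of columns), then `deg (gcd (P_1, ..., P_n)) ≥ d`. -/
theorem stmt12 {n : ℕ} [NeZero n] (hn : 2 ≤ n) (P : Fin n → ℝ[X]) (d : Fin n → ℕ)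
    (dd : ℕ) (hddpos : 0 < dd) (hdd : ∀ i, dd < d i)
    (hdeg : ∀ i, (P i).natDegree = d i)
    (hrank : (genSubres P d (dd - 1)).rank
      < Fintype.card ((j : Fin n) × Fin (d j - (dd - 1)))) :
    dd ≤ (Finset.univ.gcd P).natDegree := by
  classical
  set k := dd - 1 with hk
  have hkdd : k + 1 = dd := by omega
  -- extract a nonzero kernel vector
  obtain ⟨v, hv, hv0⟩ : ∃ v, (genSubres P d k).mulVec v = 0 ∧ v ≠ 0 := by
    by_contra h
    push_neg at h
    have hinj : Function.Injective (genSubres P d k).mulVecLin := by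
      rw [← LinearMap.ker_eq_bot, LinearMap.ker_eq_bot']
      intro w hw
      exact h w (by simpa [Matrix.mulVecLin_apply] using hw)
    have h2 := LinearMap.finrank_range_of_inj hinj
    rw [Matrix.rank, h2, Module.finrank_fintype_fun_eq_card] at hrank
    exact lt_irrefl _ hrank
  have hP0 : P 0 ≠ 0 := by
    intro h
    have h1 := hdeg 0
    rw [h, natDegree_zero] at h1
    have := hdd 0; omega
  -- the row equations become polynomial identities
  have heq : ∀ i : Fin n, i ≠ 0 →
      Hpoly d k v 0 * P i + Hpoly d k v i * P 0 = 0 := by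
    intro i hi
    ext s
    rw [coeff_add, coeff_zero]
    by_cases hs : s < d 0 + d i - k
    · have hrlt : (d 0 + d i - k - 1 - s) < (if i = 0 then 0 else d 0 + d i - k) := by
        rw [if_neg hi]
        have := hdd 0; have := hdd i; omega
      have hrow := congrFun hv ⟨i, ⟨d 0 + d i - k - 1 - s, hrlt⟩⟩
      simp only [Matrix.mulVec, dotProduct, Pi.zero_apply] at hrow
      rw [← Finset.univ_sigma_univ, Finset.sum_sigma] at hrow
      rw [← Finset.sum_subset (Finset.subset_univ ({0, i} : Finset (Fin n)))
        (by
          intro j _ hj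
          simp only [Finset.mem_insert, Finset.mem_singleton, not_or] at hj
          apply Finset.sum_eq_zero
          intro c _
          rw [show genSubres P d k ⟨i, ⟨d 0 + d i - k - 1 - s, hrlt⟩⟩ ⟨j, c⟩ = 0 by
            simp [genSubres, hj.1, hj.2], zero_mul])] at hrow
      rw [Finset.sum_pair (fun h => hi h.symm)] at hrow
      rw [Hpoly_mul_coeff, Hpoly_mul_coeff]
      refine Eq.trans ?_ hrow
      congr 1
      · refine Finset.sum_congr rfl fun c _ => ?_
        rw [show genSubres P d k ⟨i, ⟨d 0 + d i - k - 1 - s, hrlt⟩⟩ ⟨0, c⟩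
            = convEntry (P i) (d i) (d 0 + d i - k - 1 - s) c from by simp [genSubres]]
        rw [← entry_match (P i) (d i) (d 0 - k) (d 0 + d i - k)
          (d 0 + d i - k - 1 - s) s c (hdeg i)
          (by have := hdd 0; have := hdd i; omega)
          (by have := hdd 0; omega) c.2 hs rfl]
        ring
      · refine Finset.sum_congr rfl fun c _ => ?_
        rw [show genSubres P d k ⟨i, ⟨d 0 + d i - k - 1 - s, hrlt⟩⟩ ⟨i, c⟩
            = convEntry (P 0) (d 0) (d 0 + d i - k - 1 - s) c from by simp [genSubres, hi]]
        rw [← entry_match (P 0) (d 0) (d i - k) (d 0 + d i - k)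
          (d 0 + d i - k - 1 - s) s c (hdeg 0)
          (by have := hdd 0; have := hdd i; omega)
          (by have := hdd i; omega) c.2 hs rfl]
        ring
    · push_neg at hs
      have hb0 := Hpoly_natDegree d k v 0
      have hbi := Hpoly_natDegree d k v i
      rw [coeff_eq_zero_of_natDegree_lt, coeff_eq_zero_of_natDegree_lt, add_zero]
      · refine lt_of_le_of_lt natDegree_mul_le ?_
        rw [hdeg 0]
        have := hdd 0; have := hdd i; omega
      · refine lt_of_le_of_lt natDegree_mul_le ?_
        rw [hdeg i]
        have := hdd 0; have := hdd i; omega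
  by_cases hH0 : Hpoly d k v 0 = 0
  · exfalso
    apply hv0
    funext x
    obtain ⟨j, c⟩ := x
    simp only [Pi.zero_apply]
    by_cases hj : j = 0
    · subst hj
      rw [← Hpoly_coeff d k v 0 c, hH0, coeff_zero]
    · have h1 := heq j hj
      rw [hH0, zero_mul, zero_add] at h1
      have h2 : Hpoly d k v j = 0 := by
        rcases mul_eq_zero.1 h1 with h | h
        · exact h
        · exact absurd h hP0
      rw [← Hpoly_coeff d k v j c, h2, coeff_zero]
  · -- main case
    set g := GCDMonoid.gcd (P 0) (Hpoly d k v 0) with hgdef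
    have hgH : g ∣ Hpoly d k v 0 := gcd_dvd_right _ _
    have hgP : g ∣ P 0 := gcd_dvd_left _ _
    have hgne : g ≠ 0 := gcd_ne_zero_of_left hP0
    set A := P 0 / g with hA
    set B := Hpoly d k v 0 / g with hB
    have hPA : g * A = P 0 := EuclideanDomain.mul_div_cancel' hgne hgP
    have hHB : g * B = Hpoly d k v 0 := EuclideanDomain.mul_div_cancel' hgne hgH
    have hcop : IsCoprime A B := isCoprime_div_gcd_div_gcd hH0
    have hA0 : A ≠ 0 := by
      intro h
      exact hP0 (by rw [← hPA, h, mul_zero])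
    have hAdvd : ∀ i, A ∣ P i := by
      intro i
      by_cases hi : i = 0
      · subst hi
        exact Dvd.intro_left g hPA
      · have h1 := heq i hi
        have h2 : B * P i = A * (-(Hpoly d k v i)) := by
          apply mul_left_cancel₀ hgne
          calc g * (B * P i) = (Hpoly d k v 0) * P i := by rw [← hHB]; ring
            _ = -(Hpoly d k v i * P 0) := by
                rw [eq_neg_of_add_eq_zero_left h1]
            _ = g * (A * -(Hpoly d k v i)) := by rw [← hPA]; ring
        exact hcop.dvd_of_dvd_mul_left ⟨-(Hpoly d k v i), h2⟩
    have hgcd0 : Finset.univ.gcd P ≠ 0 := by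
      rw [Ne, Finset.gcd_eq_zero_iff]
      intro h
      exact hP0 (h 0 (Finset.mem_univ 0))
    have h1 : A.natDegree ≤ (Finset.univ.gcd P).natDegree :=
      Polynomial.natDegree_le_of_dvd (Finset.dvd_gcd fun i _ => hAdvd i) hgcd0
    have h2 : g.natDegree + A.natDegree = d 0 := by
      rw [← hdeg 0, ← hPA, natDegree_mul hgne hA0]
    have h3 : g.natDegree ≤ (Hpoly d k v 0).natDegree :=
      Polynomial.natDegree_le_of_dvd hgH hH0
    have h4 := Hpoly_natDegree d k v 0
    have := hdd 0
    omega
end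

section
/- Suppose polynomials P̃_1,...,P̃_n and nonzero cofactors U_1,...,U_n (deg U_i = d_i - d) satisfy U_1·P̃_i + U_i·P̃_1 = 0 for i = 2,...,n, where deg P̃_i ≤ d_i, and the U_i are pairwise relatively prime. If additionally deg P̃_1 = d_1, then deg(gcd(P̃_1,...,P̃_n)) = d. -/
open Polynomial

/-- if `U_1·P̃_i + U_i·P̃_1 = 0` for `i = 2, ..., n` with pairwise
relatively prime nonzero cofactors `U_i` of degree `d_i - d`, `deg P̃_i ≤ d_i`,
and `deg P̃_1 = d_1`, then `deg (gcd (P̃_1, ..., P̃_n)) = d`. -/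
theorem stmt15 {n : ℕ} [NeZero n] (hn : 2 ≤ n) (Pt U : Fin n → ℝ[X]) (d : Fin n → ℕ)
    (dd : ℕ) (hddpos : 0 < dd) (hdd : ∀ i, dd < d i)
    (hUne : ∀ i, U i ≠ 0) (hUdeg : ∀ i, (U i).natDegree = d i - dd)
    (hcop : ∀ i j, i ≠ j → IsCoprime (U i) (U j))
    (hPdeg : ∀ i, (Pt i).natDegree ≤ d i)
    (hrel : ∀ i, i ≠ 0 → U 0 * Pt i + U i * Pt 0 = 0)
    (hP1 : (Pt 0).natDegree = d 0) :
    (Finset.univ.gcd Pt).natDegree = dd := by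
  have hi1 : (⟨1, by omega⟩ : Fin n) ≠ 0 := by
    intro h
    simpa using congrArg Fin.val h
  set i1 : Fin n := ⟨1, by omega⟩
  -- U 0 divides Pt 0
  have hkey : U i1 * Pt 0 = U 0 * (-Pt i1) := by
    have := hrel i1 hi1; linear_combination this
  have hdvd : U 0 ∣ Pt 0 := by
    have hc : IsCoprime (U 0) (U i1) := hcop 0 i1 (Ne.symm hi1)
    exact hc.dvd_of_dvd_mul_left ⟨-Pt i1, hkey⟩
  obtain ⟨H, hH⟩ := hdvd
  have hP0ne : Pt 0 ≠ 0 := by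
    intro h
    rw [h, natDegree_zero] at hP1
    have := hdd 0; omega
  have hHne : H ≠ 0 := by
    intro h; rw [h, mul_zero] at hH; exact hP0ne hH
  have hHdeg : H.natDegree = dd := by
    have := hP1
    rw [hH, natDegree_mul (hUne 0) hHne, hUdeg 0] at this
    have := hdd 0
    omega
  -- for i ≠ 0, Pt i = -(U i) * H
  have hPt : ∀ i, i ≠ 0 → Pt i = -(U i) * H := by
    intro i hi
    have h1 : U 0 * Pt i = U 0 * (-(U i) * H) := by
      have := hrel i hi
      rw [hH] at this
      linear_combination this
    exact mul_left_cancel₀ (hUne 0) h1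
  set G := Finset.univ.gcd Pt with hG
  have hHdvdG : H ∣ G := by
    apply Finset.dvd_gcd
    intro i _
    by_cases hi : i = 0
    · exact ⟨U 0, by rw [hi, hH]; ring⟩
    · exact ⟨-(U i), by rw [hPt i hi]; ring⟩
  obtain ⟨K, hK⟩ := hHdvdG
  have hGdvd0 : G ∣ Pt 0 := Finset.gcd_dvd (Finset.mem_univ 0)
  have hGdvd1 : G ∣ Pt i1 := Finset.gcd_dvd (Finset.mem_univ i1)
  have hK0 : K ∣ U 0 := by
    have : H * K ∣ H * U 0 := by
      rw [← hK]; rw [hH] at hGdvd0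
      simpa [mul_comm] using hGdvd0
    exact (mul_dvd_mul_iff_left hHne).mp this
  have hK1 : K ∣ U i1 := by
    have h3 : H * K ∣ H * U i1 := by
      rw [← hK]
      rw [hPt i1 hi1] at hGdvd1
      have h2 : G ∣ U i1 * H := by
        have := hGdvd1.neg_right
        simpa [neg_mul, mul_comm] using this
      simpa [mul_comm] using h2
    exact (mul_dvd_mul_iff_left hHne).mp h3
  have hKunit : IsUnit K := (hcop 0 i1 (Ne.symm hi1)).isUnit_of_dvd' hK0 hK1
  rw [hK, natDegree_mul hHne hKunit.ne_zero, hHdeg,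
    natDegree_eq_zero_of_isUnit hKunit]
  omega
end
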